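/- arXiv:1403.1228 — 2 statements merged into one kernel-verified Lean document; each statement's English description precedes it below -/
import Mathlib

section
/- Let u0,u1,u2,u3 be four nodes of a connected graph such that u3 lies on a shortest path between u1 and u2 with d(u1,u3) = ⌈(d(u1,u2)+d(u0,u1)−d(u0,u2))/2⌉. Then ⌈(d(u0,u1)+d(u0,u2)+d(u1,u2))/2⌉ ≤ d(u0,u3)+d(u1,u2) ≤ ⌈(d(u0,u1)+d(u0,u2)+d(u1,u2))/2⌉ + 2·δ(u0,u1,u2,u3). -/
open SimpleGraph

variable {V : Type*}

noncomputable def hyp4 (G : SimpleGraph V) (a b c d : V) : ℝ :=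
  let s1 : ℝ := G.dist a b + G.dist c d
  let s2 : ℝ := G.dist a c + G.dist b d
  let s3 : ℝ := G.dist a d + G.dist b c
  let L : ℝ := max s1 (max s2 s3)
  let S : ℝ := min s1 (min s2 s3)
  (L - (s1 + s2 + s3 - L - S)) / 2

noncomputable def deltaWorst (G : SimpleGraph V) [Fintype V] : ℝ :=
  ⨆ q : V × V × V × V, hyp4 G q.1 q.2.1 q.2.2.1 q.2.2.2

theorem stmt3 (G : SimpleGraph V) (hG : G.Connected) (u0 u1 u2 u3 : V)
    (hon : G.dist u1 u3 + G.dist u3 u2 = G.dist u1 u2)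
    (hmid : (G.dist u1 u3 : ℤ) =
      ⌈((G.dist u1 u2 : ℚ) + G.dist u0 u1 - G.dist u0 u2) / 2⌉) :
    ((⌈((G.dist u0 u1 : ℚ) + G.dist u0 u2 + G.dist u1 u2) / 2⌉ : ℝ) ≤
        G.dist u0 u3 + G.dist u1 u2) ∧
    ((G.dist u0 u3 + G.dist u1 u2 : ℝ) ≤
        (⌈((G.dist u0 u1 : ℚ) + G.dist u0 u2 + G.dist u1 u2) / 2⌉ : ℝ) +
          2 * hyp4 G u0 u1 u2 u3) := by
  set a := G.dist u0 u1 with ha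
  set b := G.dist u0 u2 with hb
  set c := G.dist u1 u2 with hc
  set x := G.dist u1 u3 with hx
  set y := G.dist u3 u2 with hy
  set t := G.dist u0 u3 with ht
  -- key ceiling equality
  have hK : (⌈((a : ℚ) + b + c) / 2⌉ : ℤ) = b + x := by
    have h1 : ((a : ℚ) + b + c) / 2 = ((c : ℚ) + a - b) / 2 + (b : ℤ) := by
      push_cast; ring
    rw [h1, Int.ceil_add_intCast, ← hmid]; ring
  -- ceiling bounds for x
  have hx1 : 2 * (x : ℚ) ≥ (c : ℚ) + a - b := by
    have := Int.le_ceil (((c : ℚ) + a - b) / 2)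
    rw [← hmid] at this
    push_cast at this
    linarith
  -- triangle inequality
  have htri : (b : ℝ) ≤ t + y := by
    have := hG.dist_triangle (u := u0) (v := u3) (w := u2)
    rw [← hb, ← ht, ← hy] at this
    exact_mod_cast this
  have honR : (x : ℝ) + y = c := by exact_mod_cast hon
  have hKR : ((⌈((a : ℚ) + b + c) / 2⌉ : ℤ) : ℝ) = (b : ℝ) + x := by
    rw [hK]; push_cast; ring
  have hs12 : (a : ℝ) + y ≤ (b : ℝ) + x := by
    have : 2 * (x : ℝ) ≥ (c : ℝ) + a - b := by exact_mod_cast hx1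
    linarith
  constructor
  · rw [hKR]; linarith
  · rw [hKR]
    simp only [hyp4]
    rw [show G.dist u2 u3 = y from G.dist_comm]
    rw [← ha, ← hb, ← hc, ← hx, ← ht]
    set s1 : ℝ := (a : ℝ) + y with hs1
    set s2 : ℝ := (b : ℝ) + x with hs2def
    set s3 : ℝ := (t : ℝ) + c with hs3
    have L1 : s1 ≤ max s1 (max s2 s3) := le_max_left _ _
    have L2 : s2 ≤ max s1 (max s2 s3) := le_trans (le_max_left _ _) (le_max_right _ _)
    have L3 : s3 ≤ max s1 (max s2 s3) := le_trans (le_max_right _ _) (le_max_right _ _)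
    rcases min_cases s2 s3 with ⟨e2, _⟩ | ⟨e2, _⟩ <;>
      rcases min_cases s1 (min s2 s3) with ⟨e1, h1'⟩ | ⟨e1, h1'⟩ <;>
      rw [e2] at * <;> rw [e1] <;> linarith
end

section
/- Let Δ be a shortest-path triangle on distinct nodes u0,u1,u2 of a connected graph with d(u0,u1)+d(u1,u2)+d(u0,u2) even, and let u_{01}, u_{02}, u_{12} be Gromov product nodes on the sides. Then d(u_{01}, u_{12}) ≤ 6·δ_worst(G) + 1. -/
open SimpleGraph

variable {V : Type*}

lemma key_hyp4 (G : SimpleGraph V) (a b c e : V) :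
    ((G.dist a b : ℝ) + (G.dist c e : ℝ)) -
      max ((G.dist a c : ℝ) + (G.dist b e : ℝ)) ((G.dist a e : ℝ) + (G.dist b c : ℝ))
      ≤ 2 * hyp4 G a b c e := by
  unfold hyp4
  set x : ℝ := (G.dist a b : ℝ) + (G.dist c e : ℝ) with hx
  set y : ℝ := (G.dist a c : ℝ) + (G.dist b e : ℝ) with hy
  set z : ℝ := (G.dist a e : ℝ) + (G.dist b c : ℝ) with hz
  have hmm : min y z + max y z = y + z := min_add_max y z
  rcases le_total x (min y z) with h | h
  · have hS : min x (min y z) = x := min_eq_left h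
    have h1 : max y z ≤ max x (max y z) := le_max_right _ _
    have h2 : min y z ≤ max y z := min_le_max
    linarith
  · have hS : min x (min y z) = min y z := min_eq_right h
    have h1 : x ≤ max x (max y z) := le_max_left _ _
    linarith

lemma hyp4_le_deltaWorst (G : SimpleGraph V) [Fintype V] (a b c e : V) :
    hyp4 G a b c e ≤ deltaWorst G :=
  le_ciSup (f := fun q : V × V × V × V => hyp4 G q.1 q.2.1 q.2.2.1 q.2.2.2)
    (Set.Finite.bddAbove (Set.finite_range _)) ⟨a, b, c, e⟩

theorem stmt6 [Fintype V] (G : SimpleGraph V) (hG : G.Connected)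
    (u0 u1 u2 u01 u02 u12 : V)
    (hne01 : u0 ≠ u1) (hne02 : u0 ≠ u2) (hne12 : u1 ≠ u2)
    (heven : Even (G.dist u0 u1 + G.dist u1 u2 + G.dist u0 u2))
    (h01on : G.dist u0 u01 + G.dist u01 u1 = G.dist u0 u1)
    (h01g : 2 * G.dist u0 u01 + G.dist u1 u2 = G.dist u0 u1 + G.dist u0 u2)
    (h02on : G.dist u0 u02 + G.dist u02 u2 = G.dist u0 u2)
    (h02g : 2 * G.dist u0 u02 + G.dist u1 u2 = G.dist u0 u1 + G.dist u0 u2)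
    (h12on : G.dist u1 u12 + G.dist u12 u2 = G.dist u1 u2)
    (h12g : G.dist u1 u12 = G.dist u1 u01) :
    (G.dist u01 u12 : ℝ) ≤ 6 * deltaWorst G + 1 := by
  set δ : ℝ := deltaWorst G with hδdef
  have hδ0 : (0 : ℝ) ≤ δ := by
    have h := hyp4_le_deltaWorst G u0 u0 u0 u0
    simpa [hyp4, SimpleGraph.dist_self] using h
  -- cast hypotheses to ℝ
  have H01on : (G.dist u0 u01 : ℝ) + G.dist u01 u1 = G.dist u0 u1 := by exact_mod_cast h01on
  have H01g : 2 * (G.dist u0 u01 : ℝ) + G.dist u1 u2 = G.dist u0 u1 + G.dist u0 u2 := by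
    exact_mod_cast h01g
  have H12on : (G.dist u1 u12 : ℝ) + G.dist u12 u2 = G.dist u1 u2 := by exact_mod_cast h12on
  have H12g : (G.dist u1 u12 : ℝ) = G.dist u1 u01 := by exact_mod_cast h12g
  have C : ∀ x y : V, (G.dist x y : ℝ) = G.dist y x := fun x y => by
    rw [SimpleGraph.dist_comm]
  have c1 : (G.dist u12 u1 : ℝ) = G.dist u1 u12 := C _ _
  have c2 : (G.dist u2 u0 : ℝ) = G.dist u0 u2 := C _ _
  have c3 : (G.dist u2 u1 : ℝ) = G.dist u1 u2 := C _ _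
  have c4 : (G.dist u01 u0 : ℝ) = G.dist u0 u01 := C _ _
  have c5 : (G.dist u2 u12 : ℝ) = G.dist u12 u2 := C _ _
  have c6 : (G.dist u1 u01 : ℝ) = G.dist u01 u1 := C _ _
  -- quadruple A : (u0, u12, u1, u2) : bounds d(u0,u12)
  have hAk := key_hyp4 G u0 u12 u1 u2
  have hAd := hyp4_le_deltaWorst G u0 u12 u1 u2
  have hyzA : ((G.dist u0 u2 : ℝ) + G.dist u12 u1) = (G.dist u0 u1 : ℝ) + G.dist u12 u2 := by
    linarith
  have hmaxA : max ((G.dist u0 u1 : ℝ) + G.dist u12 u2) ((G.dist u0 u2 : ℝ) + G.dist u12 u1)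
      ≤ (G.dist u0 u1 : ℝ) + G.dist u12 u2 :=
    max_le le_rfl (le_of_eq hyzA)
  have hA : (G.dist u0 u12 : ℝ) + G.dist u1 u2 - ((G.dist u0 u1 : ℝ) + G.dist u12 u2)
      ≤ 2 * δ := by linarith
  -- quadruple B : (u2, u01, u0, u1) : bounds d(u2,u01)
  have hBk := key_hyp4 G u2 u01 u0 u1
  have hBd := hyp4_le_deltaWorst G u2 u01 u0 u1
  have hyzB : ((G.dist u2 u1 : ℝ) + G.dist u01 u0) = (G.dist u2 u0 : ℝ) + G.dist u01 u1 := by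
    linarith
  have hmaxB : max ((G.dist u2 u0 : ℝ) + G.dist u01 u1) ((G.dist u2 u1 : ℝ) + G.dist u01 u0)
      ≤ (G.dist u2 u0 : ℝ) + G.dist u01 u1 :=
    max_le le_rfl (le_of_eq hyzB)
  have hB : (G.dist u2 u01 : ℝ) + G.dist u0 u1 - ((G.dist u2 u0 : ℝ) + G.dist u01 u1)
      ≤ 2 * δ := by linarith
  -- quadruple C : (u0, u2, u01, u12)
  have hCk := key_hyp4 G u0 u2 u01 u12
  have hCd := hyp4_le_deltaWorst G u0 u2 u01 u12
  have hy : (G.dist u0 u01 : ℝ) + G.dist u2 u12 ≤ (G.dist u0 u2 : ℝ) + 4 * δ := by linarith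
  have hz : (G.dist u0 u12 : ℝ) + G.dist u2 u01 ≤ (G.dist u0 u2 : ℝ) + 4 * δ := by linarith
  have hmaxC : max ((G.dist u0 u01 : ℝ) + G.dist u2 u12) ((G.dist u0 u12 : ℝ) + G.dist u2 u01)
      ≤ (G.dist u0 u2 : ℝ) + 4 * δ := max_le hy hz
  linarith
end
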